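/- For any integer ν > 1, (ν/e)^ν · √(2πν) · e^{1/(12(ν+1))} < ν! < (ν/e)^ν · √(2πν) · e^{1/(12ν)}. -/

import Mathlib

open Real Filter Stirling Topology Nat

lemma robbins_diff_lt_up (m : ℕ) :
    Real.log (stirlingSeq (m + 1)) - Real.log (stirlingSeq (m + 2)) <
      1 / (12 * ((m : ℝ) + 1)) - 1 / (12 * ((m : ℝ) + 2)) := by
  set x : ℝ := 1 / (2 * ((m : ℝ) + 1) + 1) with hxdef
  have hx0 : 0 < x := by positivity
  have hx2 : x ^ 2 < 1 := by
    rw [hxdef, div_pow, one_pow, div_lt_one (by positivity)]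
    nlinarith [Nat.cast_nonneg (α := ℝ) m]
  have hgeo : HasSum (fun k : ℕ => (1 / 3 : ℝ) * (x ^ 2) ^ (k + 1))
      (1 / 3 * (x ^ 2 / (1 - x ^ 2))) := by
    have h := (hasSum_geometric_of_lt_one (sq_nonneg x) hx2).mul_left ((1 / 3 : ℝ) * x ^ 2)
    have hf : (fun k : ℕ => (1 / 3 : ℝ) * (x ^ 2) ^ (k + 1))
        = fun k : ℕ => (1 / 3 : ℝ) * x ^ 2 * (x ^ 2) ^ k := by
      funext k; ring
    rw [hf]
    convert h using 1
    · rfl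
    · ring
  have hS : HasSum (fun k : ℕ => (1 : ℝ) / (2 * (↑(k + 1) : ℝ) + 1) * (x ^ 2) ^ (k + 1))
      (Real.log (stirlingSeq (m + 1)) - Real.log (stirlingSeq (m + 2))) := by
    have h := log_stirlingSeq_diff_hasSum m
    convert h using 2 with k
    push_cast [hxdef]
    norm_num
  have hlt : Real.log (stirlingSeq (m + 1)) - Real.log (stirlingSeq (m + 2)) <
      1 / 3 * (x ^ 2 / (1 - x ^ 2)) := by
    rw [← hS.tsum_eq, ← hgeo.tsum_eq]
    refine Summable.tsum_lt_tsum (i := 1) (fun k => ?_) ?_ hS.summable hgeo.summable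
    · apply mul_le_mul_of_nonneg_right ?_ (by positivity)
      rw [div_le_div_iff₀ (by positivity) (by norm_num)]
      push_cast
      nlinarith [Nat.cast_nonneg (α := ℝ) k]
    · have hy : (0 : ℝ) < (x ^ 2) ^ (1 + 1) := by positivity
      apply mul_lt_mul_of_pos_right ?_ hy
      norm_num
  refine hlt.trans_le (le_of_eq ?_)
  rw [hxdef]
  have hA : (0:ℝ) < 2 * ((m:ℝ) + 1) + 1 := by positivity
  have h2 : (0:ℝ) < (2 * ((m:ℝ) + 1) + 1)^2 - 1 := by nlinarith [Nat.cast_nonneg (α:=ℝ) m]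
  have h3 : (1:ℝ) - (1 / (2 * ((m:ℝ) + 1) + 1))^2 ≠ 0 := by
    rw [div_pow, one_pow, sub_ne_zero]
    intro h
    rw [eq_comm, div_eq_one_iff_eq (by positivity)] at h
    nlinarith
  have hm1 : ((m:ℝ) + 1) ≠ 0 := by positivity
  have hm2 : ((m:ℝ) + 2) ≠ 0 := by positivity
  field_simp
  ring

lemma robbins_diff_gt_low (m : ℕ) :
    1 / (12 * ((m : ℝ) + 2)) - 1 / (12 * ((m : ℝ) + 3)) <
      Real.log (stirlingSeq (m + 1)) - Real.log (stirlingSeq (m + 2)) := by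
  set x : ℝ := 1 / (2 * ((m : ℝ) + 1) + 1) with hxdef
  have hx0 : 0 < x := by positivity
  have hS : HasSum (fun k : ℕ => (1 : ℝ) / (2 * (↑(k + 1) : ℝ) + 1) * (x ^ 2) ^ (k + 1))
      (Real.log (stirlingSeq (m + 1)) - Real.log (stirlingSeq (m + 2))) := by
    have h := log_stirlingSeq_diff_hasSum m
    convert h using 2 with k
    push_cast [hxdef]
    norm_num
  have hsingle : HasSum (fun k : ℕ => if k = 0 then (1 / 3 : ℝ) * x ^ 2 else 0)
      ((1 / 3 : ℝ) * x ^ 2) := hasSum_ite_eq 0 _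
  have hlt : (1 / 3 : ℝ) * x ^ 2 <
      Real.log (stirlingSeq (m + 1)) - Real.log (stirlingSeq (m + 2)) := by
    rw [← hS.tsum_eq, ← hsingle.tsum_eq]
    refine Summable.tsum_lt_tsum (i := 1) (fun k => ?_) ?_ hsingle.summable hS.summable
    · rcases k with _ | k
      · simp only [if_pos rfl]
        push_cast
        norm_num
      · simp only [Nat.succ_ne_zero, if_false]
        positivity
    · simp only [one_ne_zero, if_false]
      positivity
  refine lt_trans ?_ hlt
  have hm : (0:ℝ) ≤ (m:ℝ) := Nat.cast_nonneg m
  have e1 : 1 / (12 * ((m : ℝ) + 2)) - 1 / (12 * ((m : ℝ) + 3))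
      = 1 / (12 * ((m : ℝ) + 2) * ((m : ℝ) + 3)) := by
    have h1 : ((m:ℝ) + 2) ≠ 0 := by positivity
    have h2 : ((m:ℝ) + 3) ≠ 0 := by positivity
    field_simp
    ring
  have e2 : (1/3:ℝ) * x ^ 2 = 1 / (3 * (2 * ((m:ℝ) + 1) + 1)^2) := by
    have hA : (2 * ((m:ℝ) + 1) + 1) ≠ 0 := by positivity
    rw [hxdef]; field_simp
  rw [e1, e2, div_lt_div_iff₀ (by positivity) (by positivity)]
  nlinarith

set_option maxHeartbeats 1000000 in
open Real in
theorem robbins_stirling (ν : ℕ) (hν : 1 < ν) :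
    ((ν : ℝ) / exp 1) ^ ν * Real.sqrt (2 * π * ν) * exp (1 / (12 * (ν + 1))) <
        (Nat.factorial ν : ℝ) ∧
      (Nat.factorial ν : ℝ) < ((ν : ℝ) / exp 1) ^ ν * Real.sqrt (2 * π * ν) * exp (1 / (12 * ν)) := by
  set F : ℕ → ℝ := fun n => Real.log (stirlingSeq (n + 1)) - 1 / (12 * ((n : ℝ) + 1)) with hF
  set G : ℕ → ℝ := fun n => Real.log (stirlingSeq (n + 1)) - 1 / (12 * ((n : ℝ) + 2)) with hG
  have hFmono : StrictMono F := by
    apply strictMono_nat_of_lt_succ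
    intro n
    have h := robbins_diff_lt_up n
    simp only [hF]
    push_cast
    ring_nf at h ⊢
    linarith
  have hGanti : StrictAnti G := by
    apply strictAnti_nat_of_succ_lt
    intro n
    have h := robbins_diff_gt_low n
    simp only [hG]
    push_cast
    ring_nf at h ⊢
    linarith
  have hπ : (0 : ℝ) < Real.sqrt π := Real.sqrt_pos.mpr Real.pi_pos
  have hlog : Tendsto (fun n : ℕ => Real.log (stirlingSeq (n + 1))) atTop
      (𝓝 (Real.log (Real.sqrt π))) :=
    (Real.continuousAt_log hπ.ne').tendsto.comp
      (tendsto_stirlingSeq_sqrt_pi.comp (tendsto_add_atTop_nat 1))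
  have h12 : Tendsto (fun n : ℕ => 12 * ((n : ℝ) + 1)) atTop atTop :=
    (tendsto_atTop_add_const_right atTop 1 tendsto_natCast_atTop_atTop).const_mul_atTop
      (by norm_num)
  have h12' : Tendsto (fun n : ℕ => 12 * ((n : ℝ) + 2)) atTop atTop :=
    (tendsto_atTop_add_const_right atTop 2 tendsto_natCast_atTop_atTop).const_mul_atTop
      (by norm_num)
  have hz1 : Tendsto (fun n : ℕ => 1 / (12 * ((n : ℝ) + 1))) atTop (𝓝 0) := by
    simpa only [one_div, Pi.inv_def] using h12.inv_tendsto_atTop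
  have hz2 : Tendsto (fun n : ℕ => 1 / (12 * ((n : ℝ) + 2))) atTop (𝓝 0) := by
    simpa only [one_div, Pi.inv_def] using h12'.inv_tendsto_atTop
  have hFt : Tendsto F atTop (𝓝 (Real.log (Real.sqrt π))) := by
    rw [hF]; simpa only [sub_zero] using hlog.sub hz1
  have hGt : Tendsto G atTop (𝓝 (Real.log (Real.sqrt π))) := by
    rw [hG]; simpa only [sub_zero] using hlog.sub hz2
  have key : ∀ n : ℕ, F n < Real.log (Real.sqrt π) ∧ Real.log (Real.sqrt π) < G n := by
    intro n
    constructor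
    · exact lt_of_lt_of_le (hFmono (Nat.lt_succ_self n))
        (hFmono.monotone.ge_of_tendsto hFt (n + 1))
    · exact lt_of_le_of_lt (hGanti.antitone.le_of_tendsto hGt (n + 1))
        (hGanti (Nat.lt_succ_self n))
  obtain ⟨n, rfl⟩ : ∃ n, ν = n + 1 := ⟨ν - 1, (Nat.succ_pred_eq_of_pos (by omega)).symm⟩
  obtain ⟨h1, h2⟩ := key n
  have hs : 0 < stirlingSeq (n + 1) := stirlingSeq'_pos n
  have hup : stirlingSeq (n + 1) < Real.sqrt π * Real.exp (1 / (12 * ((n : ℝ) + 1))) := by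
    have h : Real.log (stirlingSeq (n + 1)) < Real.log (Real.sqrt π) + 1 / (12 * ((n : ℝ) + 1)) := by
      simp only [hF] at h1; linarith
    calc stirlingSeq (n + 1) = Real.exp (Real.log (stirlingSeq (n + 1))) := (Real.exp_log hs).symm
      _ < Real.exp (Real.log (Real.sqrt π) + 1 / (12 * ((n : ℝ) + 1))) := Real.exp_lt_exp.mpr h
      _ = Real.sqrt π * Real.exp (1 / (12 * ((n : ℝ) + 1))) := by
          rw [Real.exp_add, Real.exp_log hπ]
  have hlow : Real.sqrt π * Real.exp (1 / (12 * ((n : ℝ) + 2))) < stirlingSeq (n + 1) := by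
    have h : Real.log (Real.sqrt π) + 1 / (12 * ((n : ℝ) + 2)) < Real.log (stirlingSeq (n + 1)) := by
      simp only [hG] at h2; linarith
    calc Real.sqrt π * Real.exp (1 / (12 * ((n : ℝ) + 2)))
        = Real.exp (Real.log (Real.sqrt π) + 1 / (12 * ((n : ℝ) + 2))) := by
          rw [Real.exp_add, Real.exp_log hπ]
      _ < Real.exp (Real.log (stirlingSeq (n + 1))) := Real.exp_lt_exp.mpr h
      _ = stirlingSeq (n + 1) := Real.exp_log hs
  have hden : 0 < Real.sqrt (2 * (↑(n + 1) : ℝ)) * ((↑(n + 1) : ℝ) / Real.exp 1) ^ (n + 1) := by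
    have : (0:ℝ) < (↑(n+1):ℝ) := by positivity
    positivity
  have hfact : (Nat.factorial (n + 1) : ℝ) =
      stirlingSeq (n + 1) * (Real.sqrt (2 * (↑(n + 1) : ℝ)) *
        ((↑(n + 1) : ℝ) / Real.exp 1) ^ (n + 1)) := by
    rw [stirlingSeq, div_mul_cancel₀ _ hden.ne']
  have hsqrt : Real.sqrt π * Real.sqrt (2 * (↑(n + 1) : ℝ)) =
      Real.sqrt (2 * π * (↑(n + 1) : ℝ)) := by
    rw [← Real.sqrt_mul Real.pi_pos.le]
    ring_nf
  constructor
  · calc ((↑(n + 1) : ℝ) / Real.exp 1) ^ (n + 1) * Real.sqrt (2 * π * (↑(n + 1) : ℝ)) *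
        Real.exp (1 / (12 * ((↑(n + 1) : ℝ) + 1)))
        = (Real.sqrt π * Real.exp (1 / (12 * ((n : ℝ) + 2)))) *
          (Real.sqrt (2 * (↑(n + 1) : ℝ)) * ((↑(n + 1) : ℝ) / Real.exp 1) ^ (n + 1)) := by
          rw [← hsqrt]
          push_cast
          ring_nf
      _ < stirlingSeq (n + 1) * (Real.sqrt (2 * (↑(n + 1) : ℝ)) *
          ((↑(n + 1) : ℝ) / Real.exp 1) ^ (n + 1)) := mul_lt_mul_of_pos_right hlow hden
      _ = (Nat.factorial (n + 1) : ℝ) := hfact.symm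
  · calc (Nat.factorial (n + 1) : ℝ)
        = stirlingSeq (n + 1) * (Real.sqrt (2 * (↑(n + 1) : ℝ)) *
          ((↑(n + 1) : ℝ) / Real.exp 1) ^ (n + 1)) := hfact
      _ < (Real.sqrt π * Real.exp (1 / (12 * ((n : ℝ) + 1)))) *
          (Real.sqrt (2 * (↑(n + 1) : ℝ)) * ((↑(n + 1) : ℝ) / Real.exp 1) ^ (n + 1)) :=
          mul_lt_mul_of_pos_right hup hden
      _ = ((↑(n + 1) : ℝ) / Real.exp 1) ^ (n + 1) * Real.sqrt (2 * π * (↑(n + 1) : ℝ)) *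
          Real.exp (1 / (12 * (↑(n + 1) : ℝ))) := by
          rw [← hsqrt]
          push_cast
          ring_nf
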